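/- Let N ≥ 1 be an integer, m > 1, T > 0 and r₁ > 0. Then there exists γ₀ ≥ 1 such that for every γ ≥ γ₀ and every r₀ ∈ [r₁/2, r₁], the function u(t,x) = A(t)^{−1} ( 1 + √(r(t)² − |x|²) ), with A(t) = ((m−1)(1+γt))^{1/(m−1)} and r(t) = r₀ + log(1+γt)/(γ(m−1)), satisfies at every point of the open set Q₀ = { (t,x) ∈ (0,T) × ℝ^N : |x| < r(t) } the pointwise differential inequality ∂_t u(t,x) ≤ div_x ( u^m ∇_x u / √(u² + |∇_x u|²) )(t,x). -/

import Mathlib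

open RealInnerProductSpace

noncomputable section

/-- Classical divergence of a vector field on `ℝ^N`: the sum of the partial
derivatives of the components. -/
def divergence {N : ℕ} (V : EuclideanSpace ℝ (Fin N) → EuclideanSpace ℝ (Fin N))
    (x : EuclideanSpace ℝ (Fin N)) : ℝ :=
  ∑ i, ⟪fderiv ℝ V x (EuclideanSpace.single i 1), EuclideanSpace.single i 1⟫

/-- The flux `u^m ∇u / √(u² + |∇u|²)` of the relativistic porous medium equation, as a
spatial vector field at time `t`. -/
def fluxRel {N : ℕ} (m : ℝ) (u : ℝ → EuclideanSpace ℝ (Fin N) → ℝ) (t : ℝ)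
    (x : EuclideanSpace ℝ (Fin N)) : EuclideanSpace ℝ (Fin N) :=
  (u t x ^ m / Real.sqrt (u t x ^ 2 + ‖gradient (u t) x‖ ^ 2)) • gradient (u t) x

/-- `A(t) = ((m−1)(1+γt))^{1/(m−1)}`. -/
def Arel (m γ t : ℝ) : ℝ := ((m - 1) * (1 + γ * t)) ^ ((1:ℝ)/(m-1))

/-- `r(t) = r₀ + log(1+γt)/(γ(m−1))`. -/
def rrel (m γ r₀ t : ℝ) : ℝ := r₀ + Real.log (1 + γ * t) / (γ * (m - 1))

/-- The discontinuous subsolution profile `u(t,x) = A(t)^{−1}(1 + √(r(t)² − |x|²))`. -/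
def uRel {N : ℕ} (m γ r₀ : ℝ) (t : ℝ) (x : EuclideanSpace ℝ (Fin N)) : ℝ :=
  (Arel m γ t)⁻¹ * (1 + Real.sqrt ((rrel m γ r₀ t) ^ 2 - ‖x‖ ^ 2))

lemma grad_aux (a r : ℝ) (y : EuclideanSpace ℝ (Fin N)) (hy : ‖y‖ < r) :
    HasGradientAt (fun z : EuclideanSpace ℝ (Fin N) => a * (1 + Real.sqrt (r^2 - ‖z‖^2)))
      ((-a / Real.sqrt (r^2 - ‖y‖^2)) • y) y := by
  have hyr : (0:ℝ) ≤ ‖y‖ := norm_nonneg y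
  have hr : 0 < r := lt_of_le_of_lt hyr hy
  have hw2 : 0 < r^2 - ‖y‖^2 := by nlinarith
  set w := Real.sqrt (r^2 - ‖y‖^2) with hw
  have hwpos : 0 < w := Real.sqrt_pos.2 hw2
  -- outer function
  have houter : HasDerivAt (fun q : ℝ => a * (1 + Real.sqrt (r^2 - q)))
      (a * (-1 / (2 * w))) (‖y‖^2) := by
    have h1 : HasDerivAt (fun q : ℝ => r^2 - q) (-1) (‖y‖^2) := by
      simpa using (hasDerivAt_id (‖y‖^2)).const_sub (r^2)
    have h2 : HasDerivAt (fun q : ℝ => Real.sqrt (r^2 - q)) (-1 / (2 * w)) (‖y‖^2) := by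
      have := (Real.hasDerivAt_sqrt (x := r^2 - ‖y‖^2) (ne_of_gt hw2)).comp (‖y‖^2) h1
      refine this.congr_deriv ?_
      rw [hw]; field_simp
      -- derivative: 1/(2√(r²-s)) * (-1)
    simpa [mul_comm, mul_assoc] using (h2.const_add 1).const_mul a
  have hinner : HasFDerivAt (fun z : EuclideanSpace ℝ (Fin N) => ‖z‖^2)
      ((2:ℕ) • (innerSL ℝ y)) y := (hasStrictFDerivAt_norm_sq y).hasFDerivAt
  have hcomp := houter.comp_hasFDerivAt y hinner
  rw [hasGradientAt_iff_hasFDerivAt]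
  refine hcomp.congr_fderiv ?_
  ext v
  simp [InnerProductSpace.toDual_apply_apply, inner_smul_left, real_inner_smul_left]
  field_simp

lemma div_radial {N : ℕ} (g : ℝ → ℝ) (g' : ℝ) (x : EuclideanSpace ℝ (Fin N))
    (hg : HasDerivAt g g' (‖x‖^2))
    (V : EuclideanSpace ℝ (Fin N) → EuclideanSpace ℝ (Fin N))
    (hV : V =ᶠ[nhds x] (fun z => g (‖z‖^2) • z)) :
    divergence V x = N * g (‖x‖^2) + 2 * ‖x‖^2 * g' := by
  have hinner : HasFDerivAt (fun z : EuclideanSpace ℝ (Fin N) => ‖z‖^2)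
      ((2:ℕ) • (innerSL ℝ x)) x := (hasStrictFDerivAt_norm_sq x).hasFDerivAt
  have hc : HasFDerivAt (fun z : EuclideanSpace ℝ (Fin N) => g (‖z‖^2))
      (g' • ((2:ℕ) • (innerSL ℝ x))) x := hg.comp_hasFDerivAt x hinner
  have hF : HasFDerivAt (fun z : EuclideanSpace ℝ (Fin N) => g (‖z‖^2) • z)
      (g (‖x‖^2) • ContinuousLinearMap.id ℝ _ +
        (g' • ((2:ℕ) • (innerSL ℝ x))).smulRight x) x :=
    hc.smul (hasFDerivAt_id x)
  have hfd : fderiv ℝ V x = g (‖x‖^2) • ContinuousLinearMap.id ℝ _ +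
      (g' • ((2:ℕ) • (innerSL ℝ x))).smulRight x := by
    rw [hV.fderiv_eq, hF.fderiv]
  rw [divergence, hfd]
  have hxi : ∀ i : Fin N, ⟪x, EuclideanSpace.single i (1:ℝ)⟫ = x i := by
    intro i
    rw [real_inner_comm]
    simp [EuclideanSpace.inner_single_left]
  have hsum : ∑ i : Fin N, (x i)^2 = ‖x‖^2 := by
    rw [EuclideanSpace.norm_eq, Real.sq_sqrt (by positivity)]
    simp [sq_abs]
  simp only [ContinuousLinearMap.add_apply, ContinuousLinearMap.smul_apply,
    ContinuousLinearMap.id_apply, ContinuousLinearMap.smulRight_apply, innerSL_apply_apply,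
    inner_add_left, real_inner_smul_left, smul_eq_mul]
  simp only [real_inner_comm x, hxi]
  have h1 : ∀ i : Fin N, ⟪EuclideanSpace.single i (1:ℝ), EuclideanSpace.single i (1:ℝ)⟫ = (1:ℝ) := by
    intro i; simp [EuclideanSpace.inner_single_left]
  simp only [h1]
  rw [Finset.sum_add_distrib]
  simp only [Finset.sum_const, Finset.card_univ, Fintype.card_fin, nsmul_eq_mul, mul_one]
  have h2 : ∀ i : Fin N, g' * ((2:ℕ) * x i) * x i = 2 * (x i)^2 * g' := by
    intro i; push_cast; ring
  simp_rw [h2]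
  rw [← Finset.sum_mul, ← Finset.mul_sum, hsum]

/-- the radial coefficient of the flux -/
def Grel (m a r s : ℝ) : ℝ :=
  -(a ^ m * (1 + Real.sqrt (r^2 - s)) ^ m) /
    Real.sqrt ((r^2 - s) * (1 + Real.sqrt (r^2 - s))^2 + s)

lemma flux_eq {N : ℕ} (m a r : ℝ) (ha : 0 < a) (y : EuclideanSpace ℝ (Fin N))
    (hy : ‖y‖ < r) :
    (((a * (1 + Real.sqrt (r^2 - ‖y‖^2))) ^ m /
        Real.sqrt ((a * (1 + Real.sqrt (r^2 - ‖y‖^2))) ^ 2 +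
          ‖(-a / Real.sqrt (r^2 - ‖y‖^2)) • y‖ ^ 2)) •
      ((-a / Real.sqrt (r^2 - ‖y‖^2)) • y))
    = Grel m a r (‖y‖^2) • y := by
  have hyr : (0:ℝ) ≤ ‖y‖ := norm_nonneg y
  have hr : 0 < r := lt_of_le_of_lt hyr hy
  have hw2 : 0 < r^2 - ‖y‖^2 := by nlinarith
  set s := ‖y‖^2 with hs
  have hs0 : 0 ≤ s := by positivity
  set w := Real.sqrt (r^2 - s) with hw
  have hwpos : 0 < w := Real.sqrt_pos.2 hw2
  have hwsq : w^2 = r^2 - s := Real.sq_sqrt hw2.le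
  have hupos : 0 < a * (1 + w) := by nlinarith
  set E := (r^2 - s) * (1 + w)^2 + s with hE
  have hEpos : 0 < E := by rw [hE]; nlinarith
  set D := Real.sqrt E with hD
  have hDpos : 0 < D := Real.sqrt_pos.2 hEpos
  have hDsq : D^2 = E := Real.sq_sqrt hEpos.le
  rw [smul_smul]
  congr 1
  -- scalar identity
  have hnorm : ‖(-a / w) • y‖ ^ 2 = (a/w)^2 * s := by
    rw [norm_smul]
    rw [mul_pow, hs]
    congr 1
    rw [Real.norm_eq_abs, abs_div, abs_neg, abs_of_pos ha, abs_of_pos hwpos]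

  rw [hnorm]
  have hsqrt : Real.sqrt ((a * (1 + w)) ^ 2 + (a/w)^2 * s) = a * D / w := by
    rw [show (a * (1 + w)) ^ 2 + (a/w)^2 * s = (a * D / w)^2 by
      field_simp
      nlinarith [hDsq, hwsq]]
    exact Real.sqrt_sq (by positivity)
  rw [hsqrt]
  have hrpow : (a * (1 + w)) ^ m = a ^ m * (1 + w) ^ m :=
    Real.mul_rpow ha.le (by positivity)
  rw [hrpow, Grel]
  rw [← hw, ← hE, ← hD]
  field_simp

lemma Grel_deriv (m a r s : ℝ) (hm : 1 < m) (ha : 0 < a) (hs0 : 0 ≤ s) (hsr : s < r^2) :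
    HasDerivAt (Grel m a r)
      (a^m * (1 + Real.sqrt (r^2 - s))^(m-1) *
        (m / (2 * Real.sqrt (r^2 - s) * Real.sqrt ((r^2 - s) * (1 + Real.sqrt (r^2 - s))^2 + s))
          - (1 + Real.sqrt (r^2 - s)) * Real.sqrt (r^2 - s) * (3 + 2 * Real.sqrt (r^2 - s))
              / (2 * Real.sqrt ((r^2 - s) * (1 + Real.sqrt (r^2 - s))^2 + s) ^ 3))) s := by
  have hw2 : 0 < r^2 - s := by linarith
  set w := Real.sqrt (r^2 - s) with hw
  have hwpos : 0 < w := Real.sqrt_pos.2 hw2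
  have hwsq : w^2 = r^2 - s := Real.sq_sqrt hw2.le
  set E := (r^2 - s) * (1 + w)^2 + s with hE
  have hEpos : 0 < E := by rw [hE]; nlinarith
  set D := Real.sqrt E with hD
  have hDpos : 0 < D := Real.sqrt_pos.2 hEpos
  have hDsq : D^2 = E := Real.sq_sqrt hEpos.le
  have hq : HasDerivAt (fun q : ℝ => r^2 - q) (-1) s := by
    simpa using (hasDerivAt_id s).const_sub (r^2)
  have hw' : HasDerivAt (fun q : ℝ => Real.sqrt (r^2 - q)) (-1/(2*w)) s := by
    have := (Real.hasDerivAt_sqrt (x := r^2 - s) (ne_of_gt hw2)).comp s hq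
    refine this.congr_deriv ?_
    rw [hw]; field_simp
  have h1w : HasDerivAt (fun q : ℝ => 1 + Real.sqrt (r^2 - q)) (-1/(2*w)) s :=
    hw'.const_add 1
  have h1wpos : 0 < 1 + w := by linarith
  have hnum0 : HasDerivAt (fun q : ℝ => (1 + Real.sqrt (r^2 - q)) ^ m)
      ((m * (1 + w)^(m-1)) * (-1/(2*w))) s := by
    have := (Real.hasDerivAt_rpow_const (x := 1 + w) (p := m)
      (Or.inl (ne_of_gt h1wpos))).comp s h1w
    exact this
  have hnum : HasDerivAt (fun q : ℝ => a^m * (1 + Real.sqrt (r^2 - q)) ^ m)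
      (a^m * ((m * (1 + w)^(m-1)) * (-1/(2*w)))) s := hnum0.const_mul (a^m)
  have hpow2 : HasDerivAt (fun q : ℝ => (1 + Real.sqrt (r^2 - q)) ^ 2)
      ((2:ℕ) * (1 + w)^(2-1) * (-1/(2*w))) s := h1w.pow 2
  have hEd : HasDerivAt (fun q : ℝ => (r^2 - q) * (1 + Real.sqrt (r^2 - q))^2 + q)
      ((-1) * (1 + w)^2 + (r^2 - s) * ((2:ℕ) * (1 + w)^(2-1) * (-1/(2*w))) + 1) s := by
    have h := (hq.mul hpow2).add (hasDerivAt_id s)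
    exact h
  have hEne : ((r^2 - s) * (1 + Real.sqrt (r^2 - s))^2 + s) ≠ 0 := by
    rw [← hw, ← hE]; exact ne_of_gt hEpos
  have hDd : HasDerivAt (fun q : ℝ => Real.sqrt ((r^2 - q) * (1 + Real.sqrt (r^2 - q))^2 + q))
      (((-1) * (1 + w)^2 + (r^2 - s) * ((2:ℕ) * (1 + w)^(2-1) * (-1/(2*w))) + 1) /
        (2 * Real.sqrt ((r^2 - s) * (1 + Real.sqrt (r^2 - s))^2 + s))) s :=
    hEd.sqrt hEne
  have hDne : Real.sqrt ((r^2 - s) * (1 + Real.sqrt (r^2 - s))^2 + s) ≠ 0 := by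
    rw [← hw, ← hE, ← hD]; exact ne_of_gt hDpos
  have hGd := (hnum.neg).div hDd hDne
  refine hGd.congr_deriv ?_
  symm
  simp only [Pi.neg_apply]
  rw [← hw, ← hE, ← hD, ← hwsq]
  have hDne' : D ≠ 0 := ne_of_gt hDpos
  have hwne : w ≠ 0 := ne_of_gt hwpos
  have hsplit : (1+w)^m = (1+w)^(m-1)*(1+w) := by
    nth_rewrite 1 [show m = (m-1)+1 by ring]
    rw [Real.rpow_add h1wpos, Real.rpow_one]
  rw [hsplit]
  field_simp
  ring

lemma uRel_time_deriv {N : ℕ} (m γ r₀ t : ℝ) (x : EuclideanSpace ℝ (Fin N))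
    (hm : 1 < m) (hγ : 0 < γ) (ht : 0 < t) (hx : ‖x‖ < rrel m γ r₀ t) :
    HasDerivAt (fun τ => uRel m γ r₀ τ x)
      ((Arel m γ t)⁻¹ * ((m-1)*(1+γ*t))⁻¹ *
        (-γ * (1 + Real.sqrt ((rrel m γ r₀ t)^2 - ‖x‖^2))
          + rrel m γ r₀ t / Real.sqrt ((rrel m γ r₀ t)^2 - ‖x‖^2))) t := by
  have hm1 : (0:ℝ) < m - 1 := by linarith
  have h1γt : 0 < 1 + γ*t := by nlinarith
  have hP : 0 < (m-1)*(1+γ*t) := mul_pos hm1 h1γt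
  set r := rrel m γ r₀ t with hrdef
  have hr0 : 0 < r := lt_of_le_of_lt (norm_nonneg x) hx
  have hw2 : 0 < r^2 - ‖x‖^2 := by nlinarith [norm_nonneg x]
  set w := Real.sqrt (r^2 - ‖x‖^2) with hwdef
  have hwpos : 0 < w := Real.sqrt_pos.2 hw2
  set A := Arel m γ t with hAdef
  have hApos : 0 < A := Real.rpow_pos_of_pos hP _
  -- deriv of Arel
  have hPd : HasDerivAt (fun τ : ℝ => (m-1)*(1+γ*τ)) ((m-1)*γ) t := by
    have h := ((hasDerivAt_id t).const_mul γ).const_add (1:ℝ)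
    have h2 := h.const_mul (m-1)
    refine h2.congr_deriv ?_; ring
  have hAd : HasDerivAt (fun τ : ℝ => Arel m γ τ)
      (((1:ℝ)/(m-1)) * ((m-1)*(1+γ*t)) ^ ((1:ℝ)/(m-1) - 1) * ((m-1)*γ)) t := by
    have h := (Real.hasDerivAt_rpow_const (x := (m-1)*(1+γ*t)) (p := (1:ℝ)/(m-1))
      (Or.inl (ne_of_gt hP))).comp t hPd
    exact h
  have hAinv : HasDerivAt (fun τ : ℝ => (Arel m γ τ)⁻¹)
      (-(((1:ℝ)/(m-1)) * ((m-1)*(1+γ*t)) ^ ((1:ℝ)/(m-1) - 1) * ((m-1)*γ)) / A^2) t :=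
    hAd.inv (ne_of_gt hApos)
  -- deriv of rrel
  have h1γd : HasDerivAt (fun τ : ℝ => 1 + γ*τ) γ t := by
    simpa using ((hasDerivAt_id t).const_mul γ).const_add (1:ℝ)
  have hlog : HasDerivAt (fun τ : ℝ => Real.log (1 + γ*τ)) (γ / (1+γ*t)) t := by
    have h := (Real.hasDerivAt_log (ne_of_gt h1γt)).comp t h1γd
    refine h.congr_deriv ?_; field_simp
  have hrd : HasDerivAt (fun τ : ℝ => rrel m γ r₀ τ) (γ / (1+γ*t) / (γ*(m-1))) t := by
    unfold rrel
    exact (hlog.div_const (γ*(m-1))).const_add r₀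
  have hsqd : HasDerivAt (fun τ : ℝ => (rrel m γ r₀ τ)^2 - ‖x‖^2)
      (2 * r^(2-1) * (γ / (1+γ*t) / (γ*(m-1)))) t := by
    have := (hrd.pow 2).sub_const (‖x‖^2)
    refine this.congr_deriv (by push_cast; ring)
  have hwd : HasDerivAt (fun τ : ℝ => Real.sqrt ((rrel m γ r₀ τ)^2 - ‖x‖^2))
      ((2 * r^(2-1) * (γ / (1+γ*t) / (γ*(m-1)))) / (2*w)) t := by
    apply hsqd.sqrt
    rw [← hrdef]; exact ne_of_gt hw2
  have h1wd : HasDerivAt (fun τ : ℝ => 1 + Real.sqrt ((rrel m γ r₀ τ)^2 - ‖x‖^2))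
      ((2 * r^(2-1) * (γ / (1+γ*t) / (γ*(m-1)))) / (2*w)) t := hwd.const_add 1
  have htot := hAinv.mul h1wd
  have : (fun τ => uRel m γ r₀ τ x)
      = fun τ => (Arel m γ τ)⁻¹ * (1 + Real.sqrt ((rrel m γ r₀ τ)^2 - ‖x‖^2)) := rfl
  rw [this]
  refine htot.congr_deriv ?_
  symm
  rw [← hrdef, ← hwdef, ← hAdef]
  have hkey : ((m-1)*(1+γ*t)) ^ ((1:ℝ)/(m-1) - 1) = A / ((m-1)*(1+γ*t)) := by
    rw [Real.rpow_sub hP, Real.rpow_one, hAdef, Arel]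
  rw [hkey]
  have hAne : A ≠ 0 := ne_of_gt hApos
  have hwne : w ≠ 0 := ne_of_gt hwpos
  field_simp
  ring

set_option maxHeartbeats 1000000 in
lemma small_w (m r₁ r w D : ℝ) (hm : 1 < m) (hr₁ : 0 < r₁) (hw : 0 < w) (hr : r₁/2 ≤ r)
    (hwδ1 : w ≤ r₁/4) (hwδ2 : w*(4*m*(1+r₁)) ≤ (m-1)*r₁) (hDpos : 0 < D)
    (hD : D^2 = w^2*(1+w)^2 + (r^2 - w^2)) : r*D ≤ m*(r^2-w^2) := by
  have hr0 : 0 < r := by linarith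
  have hw2r : w^2 ≤ r^2/4 := by nlinarith
  set s := r^2 - w^2 with hs
  clear_value s
  have hs34 : 3*r^2/4 ≤ s := by rw [hs]; linarith
  have hs0 : 0 < s := by nlinarith
  have hr₁r : r₁^2 ≤ 4*r^2 := by nlinarith
  have hmm : (m-1)^2 ≤ m^2-1 := by nlinarith
  have hm2 : (0:ℝ) ≤ m^2 - 1 := by nlinarith
  have hA : (m-1)^2*r₁^2 ≤ (m^2-1)*(4*r^2) :=
    mul_le_mul hmm hr₁r (by positivity) hm2
  have h4 : 4*m*w ≤ (m-1)*r₁ := by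
    have h41 : 4*m*w ≤ 4*m*w*(1+r₁) := by nlinarith [mul_pos (mul_pos (by linarith : (0:ℝ)<4*m) hw) hr₁]
    calc 4*m*w ≤ 4*m*w*(1+r₁) := h41
    _ = w*(4*m*(1+r₁)) := by ring
    _ ≤ (m-1)*r₁ := hwδ2
  have h5 : (4*m*w)^2 ≤ ((m-1)*r₁)^2 := by
    apply pow_le_pow_left₀ (by positivity) h4
  have hmw : m^2*w^2 ≤ (m^2-1)*r^2/4 := by nlinarith
  have hmsr : (3/4)*(m^2-1)*r^2 ≤ m^2*s - r^2 := by nlinarith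
  have hterm1 : (9/16)*((m^2-1)*(r^2*r^2)) ≤ s*(m^2*s - r^2) := by nlinarith
  have hww : w*(1+w) ≤ w*(1+r₁) := by nlinarith
  have h6 : 4*(w*(1+w)) ≤ (m-1)*r₁ := by
    calc 4*(w*(1+w)) ≤ 4*(w*(1+r₁)) := by linarith
    _ ≤ 4*m*(w*(1+r₁)) := by nlinarith
    _ = w*(4*m*(1+r₁)) := by ring
    _ ≤ (m-1)*r₁ := hwδ2
  have h7 : (4*(w*(1+w)))^2 ≤ ((m-1)*r₁)^2 := by
    apply pow_le_pow_left₀ (by positivity) h6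
  have hterm2 : w^2*(1+w)^2 ≤ (m^2-1)*r^2/4 := by nlinarith
  have hterm2' : r^2*(w^2*(1+w)^2) ≤ r^2*((m^2-1)*r^2/4) :=
    mul_le_mul_of_nonneg_left hterm2 (sq_nonneg r)
  have hsq : (r*D)^2 ≤ (m*s)^2 := by
    have hexp : (r*D)^2 = r^2*(w^2*(1+w)^2) + r^2*s := by
      rw [mul_pow, hD]; ring
    linarith [hterm1, hterm2', mul_nonneg hm2 (by positivity : (0:ℝ) ≤ r^2*r^2),
      hs0.le, sq_nonneg r, mul_le_mul_of_nonneg_left hs34 (sq_nonneg r)]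
  nlinarith [mul_pos hr0 hDpos, mul_pos (by linarith : (0:ℝ) < m) hs0]

set_option maxHeartbeats 1000000 in
lemma key_ineq (N : ℕ) (hN : 1 ≤ N) (m r₁ T : ℝ) (hm : 1 < m) (hr₁ : 0 < r₁) (hT : 0 < T)
    (R δ C γ r w s D : ℝ)
    (hR : R = r₁ + T/(m-1))
    (hδ : δ = min (r₁/4) ((m-1)*r₁/(4*m*(1+r₁))))
    (hC : C = (1+R)^(m-1) * (2*N*(1+R)/r₁ + 8*R^3*(1+R)*(3+2*R)/r₁^3))
    (hγ1 : 1 ≤ γ) (hγ : R/δ + C + 1 ≤ γ)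
    (hr : r₁/2 ≤ r) (hrR : r ≤ R) (hw : 0 < w) (hwr : w ≤ r) (hs : s = r^2 - w^2)
    (hDpos : 0 < D) (hD : D^2 = w^2*(1+w)^2 + s) :
    -γ*(1+w) + r/w ≤
      (1+w)^(m-1) * (-(N:ℝ)*(1+w)/D + m*s/(w*D) - s*(1+w)*w*(3+2*w)/D^3) := by
  have hm1 : (0:ℝ) < m - 1 := by linarith
  have hr0 : 0 < r := lt_of_lt_of_le (by linarith) hr
  have hR0 : 0 < R := lt_of_lt_of_le hr0 hrR
  have hδpos : 0 < δ := by
    rw [hδ]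
    apply lt_min (by linarith)
    have : 0 < 4*m*(1+r₁) := by nlinarith
    positivity
  have hs0 : 0 ≤ s := by nlinarith
  have hwR : w ≤ R := le_trans hwr hrR
  have hsR : s ≤ R^2 := by nlinarith
  have hDr : r ≤ D := by nlinarith [sq_nonneg w, sq_nonneg (1+w)]
  have hDr₁ : r₁/2 ≤ D := le_trans hr hDr
  have h1w : (0:ℝ) < 1 + w := by linarith
  have hP1 : 1 ≤ (1+w)^(m-1) := by
    have := Real.rpow_le_rpow (by norm_num : (0:ℝ) ≤ 1) (by linarith : (1:ℝ) ≤ 1 + w) hm1.le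
    simpa [Real.one_rpow] using this
  have hPR : (1+w)^(m-1) ≤ (1+R)^(m-1) :=
    Real.rpow_le_rpow (by linarith) (by linarith) hm1.le
  have hPw0 : 0 < (1+w)^(m-1) := Real.rpow_pos_of_pos h1w _
  have hN1 : (1:ℝ) ≤ N := by exact_mod_cast hN
  have hb1 : (N:ℝ)*(1+w)/D ≤ 2*N*(1+R)/r₁ := by
    have h := div_le_div₀ (by positivity : (0:ℝ) ≤ N*(1+R)) (by nlinarith : (N:ℝ)*(1+w) ≤ N*(1+R))
      (by linarith : (0:ℝ) < r₁/2) hDr₁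
    calc (N:ℝ)*(1+w)/D ≤ N*(1+R)/(r₁/2) := h
    _ = 2*N*(1+R)/r₁ := by rw [div_div_eq_mul_div]; ring
  have hb2 : s*(1+w)*w*(3+2*w)/D^3 ≤ 8*R^3*(1+R)*(3+2*R)/r₁^3 := by
    have hnum : s*(1+w)*w*(3+2*w) ≤ R^3*(1+R)*(3+2*R) := by
      calc s*(1+w)*w*(3+2*w) ≤ R^2*(1+R)*R*(3+2*R) := by
            gcongr <;> nlinarith
      _ = R^3*(1+R)*(3+2*R) := by ring
    have hden : (r₁/2)^3 ≤ D^3 := pow_le_pow_left₀ (by linarith) hDr₁ 3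
    have h := div_le_div₀ (by positivity : (0:ℝ) ≤ R^3*(1+R)*(3+2*R)) hnum
      (by positivity : (0:ℝ) < (r₁/2)^3) hden
    calc s*(1+w)*w*(3+2*w)/D^3 ≤ R^3*(1+R)*(3+2*R)/(r₁/2)^3 := h
    _ = 8*R^3*(1+R)*(3+2*R)/r₁^3 := by rw [div_pow, div_div_eq_mul_div]; ring
  have hCbound : (1+w)^(m-1) * ((N:ℝ)*(1+w)/D + s*(1+w)*w*(3+2*w)/D^3) ≤ C := by
    rw [hC]
    apply mul_le_mul hPR (add_le_add hb1 hb2) (by positivity) (by positivity)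
  have hC0 : 0 ≤ C := le_trans (by positivity) hCbound
  have hT10 : 0 ≤ m*s/(w*D) := by positivity
  have hRHS : (1+w)^(m-1) * (-(N:ℝ)*(1+w)/D + m*s/(w*D) - s*(1+w)*w*(3+2*w)/D^3)
      = (1+w)^(m-1) * (m*s/(w*D)) - (1+w)^(m-1) * ((N:ℝ)*(1+w)/D + s*(1+w)*w*(3+2*w)/D^3) := by
    ring
  rw [hRHS]
  have hmain : -γ*(1+w) + r/w ≤ m*s/(w*D) - C := by
    rcases le_or_gt w δ with hcase | hcase
    · have hwδ1 : w ≤ r₁/4 := le_trans hcase (by rw [hδ]; exact min_le_left _ _)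
      have hwδ2 : w * (4*m*(1+r₁)) ≤ (m-1)*r₁ := by
        have h2 : w ≤ (m-1)*r₁/(4*m*(1+r₁)) := le_trans hcase (by rw [hδ]; exact min_le_right _ _)
        have hpos : 0 < 4*m*(1+r₁) := by nlinarith
        calc w * (4*m*(1+r₁)) ≤ ((m-1)*r₁/(4*m*(1+r₁))) * (4*m*(1+r₁)) :=
              mul_le_mul_of_nonneg_right h2 hpos.le
        _ = (m-1)*r₁ := by field_simp
      have hms : r*D ≤ m*(r^2-w^2) :=
        small_w m r₁ r w D hm hr₁ hw hr hwδ1 hwδ2 hDpos (by rw [hD, hs])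
      have hrw : r/w ≤ m*s/(w*D) := by
        rw [div_le_div_iff₀ hw (by positivity)]
        rw [hs]
        nlinarith
      have hγC : C ≤ γ := by
        have : 0 ≤ R/δ := by positivity
        linarith
      have hγw : 0 ≤ γ*w := mul_nonneg (by linarith) hw.le
      have : C ≤ γ*(1+w) := by nlinarith
      linarith
    · have hrw : r/w ≤ R/δ := div_le_div₀ hR0.le hrR hδpos hcase.le
      have hγw : 0 ≤ γ*w := mul_nonneg (by linarith) hw.le
      have : R/δ + C ≤ γ*(1+w) := by nlinarith
      linarith
  have hfin : m*s/(w*D) - C ≤ (1+w)^(m-1)*(m*s/(w*D))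
      - (1+w)^(m-1) * ((N:ℝ)*(1+w)/D + s*(1+w)*w*(3+2*w)/D^3) := by
    have h1 : m*s/(w*D) ≤ (1+w)^(m-1)*(m*s/(w*D)) := le_mul_of_one_le_left hT10 hP1
    linarith
  linarith


lemma combine_eq (m a lam nn w D s : ℝ) (hw : 0 < w) (hD : 0 < D) (h1w : 0 < 1 + w)
    (ham : a^m = a*lam) :
    nn * (-(a^m * (1+w)^m)/D) + 2*s*(a^m * (1+w)^(m-1) *
        (m/(2*w*D) - (1+w)*w*(3+2*w)/(2*D^3)))
      = a*lam*((1+w)^(m-1) * (-nn*(1+w)/D + m*s/(w*D) - s*(1+w)*w*(3+2*w)/D^3)) := by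
  have hsplit : (1+w)^m = (1+w)^(m-1)*(1+w) := by
    nth_rewrite 1 [show m = (m-1)+1 by ring]
    rw [Real.rpow_add h1w, Real.rpow_one]
  rw [ham, hsplit]
  have hwne : w ≠ 0 := ne_of_gt hw
  have hDne : D ≠ 0 := ne_of_gt hD
  field_simp
  ring

set_option maxHeartbeats 2000000 in
/-- for `N ≥ 1`, `m > 1`, `T > 0`, `r₁ > 0` there exists `γ₀ ≥ 1` such
that for every `γ ≥ γ₀` and every `r₀ ∈ [r₁/2, r₁]`, the function
`u(t,x) = A(t)^{−1}(1 + √(r(t)² − |x|²))` satisfies the pointwise inequality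
`∂_t u ≤ div_x (u^m ∇_x u / √(u² + |∇_x u|²))` in `Q₀ = {(t,x) : 0 < t < T, |x| < r(t)}`. -/
theorem stmt_15 (N : ℕ) (hN : 1 ≤ N) (m T r₁ : ℝ) (hm : 1 < m) (hT : 0 < T)
    (hr₁ : 0 < r₁) :
    ∃ γ₀ : ℝ, 1 ≤ γ₀ ∧ ∀ γ : ℝ, γ₀ ≤ γ → ∀ r₀ ∈ Set.Icc (r₁/2) r₁,
      ∀ (t : ℝ) (x : EuclideanSpace ℝ (Fin N)),
        0 < t → t < T → ‖x‖ < rrel m γ r₀ t →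
        deriv (fun s => uRel m γ r₀ s x) t ≤
          divergence (fluxRel m (uRel m γ r₀ (N := N)) t) x := by
  have hm1 : (0:ℝ) < m - 1 := by linarith
  set R : ℝ := r₁ + T/(m-1) with hRdef
  set δ : ℝ := min (r₁/4) ((m-1)*r₁/(4*m*(1+r₁))) with hδdef
  set C : ℝ := (1+R)^(m-1) * (2*N*(1+R)/r₁ + 8*R^3*(1+R)*(3+2*R)/r₁^3) with hCdef
  refine ⟨max 1 (R/δ + C + 1), le_max_left _ _, ?_⟩
  intro γ hγ r₀ hr₀ t x ht htT hx
  clear_value R δ C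
  obtain ⟨hr₀l, hr₀u⟩ := hr₀
  have hγ1 : (1:ℝ) ≤ γ := le_trans (le_max_left _ _) hγ
  have hγge : R/δ + C + 1 ≤ γ := le_trans (le_max_right _ _) hγ
  have hγpos : (0:ℝ) < γ := by linarith
  have h1γt : (0:ℝ) < 1 + γ*t := by nlinarith
  have hP : 0 < (m-1)*(1+γ*t) := mul_pos hm1 h1γt
  -- bounds on r
  have hlog0 : 0 ≤ Real.log (1+γ*t) := Real.log_nonneg (by nlinarith)
  have hrlow : r₁/2 ≤ rrel m γ r₀ t := by
    rw [rrel]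
    have : 0 ≤ Real.log (1+γ*t)/(γ*(m-1)) := div_nonneg hlog0 (by positivity)
    linarith
  have hrR : rrel m γ r₀ t ≤ R := by
    rw [rrel, hRdef]
    have hlog_le : Real.log (1+γ*t) ≤ γ*t := by
      have := Real.log_le_sub_one_of_pos h1γt
      linarith
    have h2 : Real.log (1+γ*t)/(γ*(m-1)) ≤ (γ*t)/(γ*(m-1)) := by
      apply div_le_div_of_nonneg_right hlog_le (by positivity)
    have h3 : (γ*t)/(γ*(m-1)) = t/(m-1) := by
      rw [mul_div_mul_left _ _ (ne_of_gt hγpos)]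
    have h4 : t/(m-1) ≤ T/(m-1) := by
      apply div_le_div_of_nonneg_right htT.le hm1.le
    linarith [h2, h3 ▸ h2]
  have hr0 : 0 < rrel m γ r₀ t := lt_of_le_of_lt (norm_nonneg x) hx
  have hApos : 0 < Arel m γ t := Real.rpow_pos_of_pos hP _
  have hapos : 0 < (Arel m γ t)⁻¹ := inv_pos.2 hApos
  have hs0 : (0:ℝ) ≤ ‖x‖^2 := by positivity
  have hsr : ‖x‖^2 < (rrel m γ r₀ t)^2 := by nlinarith [norm_nonneg x]
  -- flux is radial near x
  have hop : IsOpen {z : EuclideanSpace ℝ (Fin N) | ‖z‖ < rrel m γ r₀ t} :=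
    isOpen_lt continuous_norm continuous_const
  have hVeq : fluxRel m (uRel m γ r₀) t =ᶠ[nhds x]
      (fun z => Grel m (Arel m γ t)⁻¹ (rrel m γ r₀ t) (‖z‖^2) • z) := by
    filter_upwards [hop.mem_nhds hx] with z hz
    have hg : HasGradientAt (uRel m γ r₀ t)
        ((-(Arel m γ t)⁻¹ / Real.sqrt ((rrel m γ r₀ t)^2 - ‖z‖^2)) • z) z :=
      grad_aux (Arel m γ t)⁻¹ (rrel m γ r₀ t) z hz
    have hgrad := hg.gradient
    show (uRel m γ r₀ t z ^ m / Real.sqrt (uRel m γ r₀ t z ^ 2 +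
        ‖gradient (uRel m γ r₀ t) z‖ ^ 2)) • gradient (uRel m γ r₀ t) z = _
    rw [hgrad]
    exact flux_eq m (Arel m γ t)⁻¹ (rrel m γ r₀ t) hapos z hz
  -- divergence value
  have hGd := Grel_deriv m (Arel m γ t)⁻¹ (rrel m γ r₀ t) (‖x‖^2) hm hapos hs0 hsr
  have hdiv := div_radial _ _ x hGd _ hVeq
  have hud := (uRel_time_deriv m γ r₀ t x hm hγpos ht hx).deriv
  rw [hud, hdiv]
  simp only [Grel]
  -- abbreviations
  have hw2 : 0 < (rrel m γ r₀ t)^2 - ‖x‖^2 := by linarith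
  set w := Real.sqrt ((rrel m γ r₀ t)^2 - ‖x‖^2) with hwdef
  have hwpos : 0 < w := Real.sqrt_pos.2 hw2
  have hwsq : w^2 = (rrel m γ r₀ t)^2 - ‖x‖^2 := Real.sq_sqrt hw2.le
  have h1wpos : (0:ℝ) < 1 + w := by linarith
  have hEpos : 0 < ((rrel m γ r₀ t)^2 - ‖x‖^2) * (1+w)^2 + ‖x‖^2 := by positivity
  set D := Real.sqrt (((rrel m γ r₀ t)^2 - ‖x‖^2) * (1+w)^2 + ‖x‖^2) with hDdef
  have hDpos : 0 < D := Real.sqrt_pos.2 hEpos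
  have hDsq : D^2 = w^2*(1+w)^2 + ‖x‖^2 := by
    rw [hDdef, Real.sq_sqrt hEpos.le, hwsq]
  have hwr : w ≤ rrel m γ r₀ t := by
    have h1 : w ≤ Real.sqrt ((rrel m γ r₀ t)^2) := Real.sqrt_le_sqrt (by nlinarith [norm_nonneg x])
    rwa [Real.sqrt_sq hr0.le] at h1
  have hseq : ‖x‖^2 = (rrel m γ r₀ t)^2 - w^2 := by rw [hwsq]; ring
  -- a^m = a * lam
  have hA1 : (Arel m γ t)^(m-1) = (m-1)*(1+γ*t) := by
    rw [Arel, ← Real.rpow_mul hP.le]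
    rw [show (1:ℝ)/(m-1)*(m-1) = (1:ℝ) by field_simp]
    exact Real.rpow_one _
  have ham : ((Arel m γ t)⁻¹)^m = (Arel m γ t)⁻¹ * ((m-1)*(1+γ*t))⁻¹ := by
    have h0 : ((Arel m γ t)⁻¹)^m = ((Arel m γ t)⁻¹)^((m-1)+1) := by rw [sub_add_cancel]
    rw [h0, Real.rpow_add hapos, Real.rpow_one, Real.inv_rpow hApos.le, hA1]
    ring
  have hkey := key_ineq N hN m r₁ T hm hr₁ hT R δ C γ (rrel m γ r₀ t) w (‖x‖^2) D
    hRdef hδdef hCdef hγ1 hγge hrlow hrR hwpos hwr hseq hDpos hDsq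
  have hscaled := mul_le_mul_of_nonneg_left hkey
    (by positivity : (0:ℝ) ≤ (Arel m γ t)⁻¹ * ((m-1)*(1+γ*t))⁻¹)
  have hcomb := combine_eq m (Arel m γ t)⁻¹ ((m-1)*(1+γ*t))⁻¹ (N:ℝ) w D (‖x‖^2)
    hwpos hDpos h1wpos ham
  linarith [hscaled, hcomb.le, hcomb.ge]

end
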